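/- Let N be a positive integer with N ≢ 1 (mod 4) and ⌈N/4⌉ ≡ 1 (mod 5). Then every 5D-layout of N lines covers at least ⌈N/4⌉ · 5 + 4 lattice points. -/

import Mathlib

/-- The four directions of Morpion Solitaire. -/
def Dir : Set (ℤ × ℤ) := {(1, 0), (0, 1), (1, 1), (1, -1)}

/-- The line (segment) of length 5 starting at `q` in direction `d`:
the set `{q + t • d : t ∈ {0,1,2,3,4}}`. -/
def seg (q d : ℤ × ℤ) : Set (ℤ × ℤ) := {p | ∃ t : ℕ, t ≤ 4 ∧ p = q + (t : ℤ) • d}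

/-- The initial configuration of 36 crosses. -/
def S0 : Set (ℤ × ℤ) := {p |
  ((p.2 = 0 ∨ p.2 = 9) ∧ 3 ≤ p.1 ∧ p.1 ≤ 6) ∨
  ((p.1 = 0 ∨ p.1 = 9) ∧ 3 ≤ p.2 ∧ p.2 ≤ 6) ∨
  ((p.1 = 3 ∨ p.1 = 6) ∧ ((0 ≤ p.2 ∧ p.2 ≤ 3) ∨ (6 ≤ p.2 ∧ p.2 ≤ 9))) ∨
  ((p.2 = 3 ∨ p.2 = 6) ∧ ((0 ≤ p.1 ∧ p.1 ≤ 3) ∨ (6 ≤ p.1 ∧ p.1 ≤ 9)))}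

/-- A play of Morpion Solitaire 5D of length `N`: crosses `p i`, and lines
`seg (q i) (d i)` in directions `d i ∈ Dir`, subject to the rules of 5D.
(Index `i : Fin N` corresponds to move `i + 1`.) -/
structure Play (N : ℕ) where
  p : Fin N → ℤ × ℤ
  q : Fin N → ℤ × ℤ
  d : Fin N → ℤ × ℤ
  d_mem : ∀ i, d i ∈ Dir
  /-- rule (1): the new cross is placed on an empty point -/
  p_not_S0 : ∀ i, p i ∉ S0
  p_new : ∀ i j : Fin N, j < i → p j ≠ p i
  /-- rule (2): the new line passes through the new cross -/
  p_mem : ∀ i, p i ∈ seg (q i) (d i)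
  /-- rule (3): the new line passes only through existing crosses -/
  seg_sub : ∀ i, seg (q i) (d i) ⊆ S0 ∪ {x | ∃ j : Fin N, j ≤ i ∧ p j = x}
  /-- rule (4): two lines in the same direction are disjoint -/
  disj : ∀ i j : Fin N, j < i → d j = d i → seg (q i) (d i) ∩ seg (q j) (d j) = ∅

/-- A 5D-layout of `N` lines: `N` pairwise distinct lines, each in a direction
from `Dir`, such that two distinct lines in the same direction are disjoint. -/
structure Layout (N : ℕ) where
  q : Fin N → ℤ × ℤ
  d : Fin N → ℤ × ℤ
  d_mem : ∀ i, d i ∈ Dir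
  distinct : ∀ i j : Fin N, i ≠ j → seg (q i) (d i) ≠ seg (q j) (d j)
  disj : ∀ i j : Fin N, i ≠ j → d i = d j → seg (q i) (d i) ∩ seg (q j) (d j) = ∅

/-- The set of lattice points covered by the lines of a layout. -/
def Layout.covered {N : ℕ} (L : Layout N) : Set (ℤ × ℤ) := ⋃ i, seg (L.q i) (L.d i)

open Finset

def segF (q d : ℤ × ℤ) : Finset (ℤ × ℤ) := (Finset.range 5).image (fun t : ℕ => q + (t : ℤ) • d)

lemma mem_segF {p q d : ℤ × ℤ} : p ∈ segF q d ↔ p ∈ seg q d := by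
  simp only [segF, seg, Finset.mem_image, Finset.mem_range, Set.mem_setOf_eq]
  constructor
  · rintro ⟨t, ht, rfl⟩; exact ⟨t, by omega, rfl⟩
  · rintro ⟨t, ht, rfl⟩; exact ⟨t, by omega, rfl⟩

lemma card_segF {q d : ℤ × ℤ} (hd : d ∈ Dir) : (segF q d).card = 5 := by
  rw [segF, Finset.card_image_of_injOn, Finset.card_range]
  intro t ht t' ht' h
  simp only [Dir, Set.mem_insert_iff, Set.mem_singleton_iff] at hd
  rcases hd with rfl | rfl | rfl | rfl <;>
    · simp only [Prod.ext_iff, Prod.fst_add, Prod.snd_add, Prod.smul_fst, Prod.smul_snd,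
        smul_eq_mul] at h
      omega

def phi (a b : ZMod 5) (p : ℤ × ℤ) : ZMod 5 := a * (p.1 : ZMod 5) + b * (p.2 : ZMod 5)

lemma phi_add_smul (a b : ZMod 5) (q d : ℤ × ℤ) (t : ℕ) :
    phi a b (q + (t : ℤ) • d) = phi a b q + (t : ZMod 5) * (a * (d.1 : ZMod 5) + b * (d.2 : ZMod 5)) := by
  simp only [phi, Prod.fst_add, Prod.snd_add, Prod.smul_fst, Prod.smul_snd, smul_eq_mul]
  push_cast
  ring

lemma segF_hits {q d : ℤ × ℤ} {a b : ZMod 5}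
    (h : a * (d.1 : ZMod 5) + b * (d.2 : ZMod 5) ≠ 0) (c : ZMod 5) :
    ∃ p ∈ segF q d, phi a b p = c := by
  haveI : Fact (Nat.Prime 5) := ⟨by norm_num⟩
  set e := a * (d.1 : ZMod 5) + b * (d.2 : ZMod 5) with he
  set t : ZMod 5 := (c - phi a b q) * e⁻¹ with ht
  refine ⟨q + (t.val : ℤ) • d, ?_, ?_⟩
  · exact Finset.mem_image.2 ⟨t.val, Finset.mem_range.2 (ZMod.val_lt t), rfl⟩
  · rw [phi_add_smul, ← he, ZMod.natCast_val, ZMod.cast_id, ht,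
      mul_assoc, inv_mul_cancel₀ h, mul_one]
    ring

lemma segF_const {q d : ℤ × ℤ} {a b : ZMod 5}
    (h : a * (d.1 : ZMod 5) + b * (d.2 : ZMod 5) = 0) {p : ℤ × ℤ} (hp : p ∈ segF q d) :
    phi a b p = phi a b q := by
  obtain ⟨t, -, rfl⟩ := Finset.mem_image.1 hp
  rw [phi_add_smul, h, mul_zero, add_zero]

lemma covered_finite {N : ℕ} (L : Layout N) : L.covered.Finite := by
  apply Set.finite_iUnion
  intro i
  have : seg (L.q i) (L.d i) = ↑(segF (L.q i) (L.d i)) := by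
    ext p; rw [Finset.mem_coe, mem_segF]
  rw [this]; exact (segF _ _).finite_toSet

lemma card_le_covered {N : ℕ} (L : Layout N) (U : Finset (ℤ × ℤ))
    (hU : ∀ p ∈ U, p ∈ L.covered) : U.card ≤ L.covered.ncard := by
  rw [← Set.ncard_coe_finset]
  exact Set.ncard_le_ncard hU (covered_finite L)

lemma segF_disjoint {N : ℕ} (L : Layout N) {i j : Fin N} (hij : i ≠ j)
    (hd : L.d i = L.d j) :
    Disjoint (segF (L.q i) (L.d i)) (segF (L.q j) (L.d j)) := by
  rw [Finset.disjoint_left]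
  intro x hxi hxj
  have h := L.disj i j hij hd
  have : x ∈ seg (L.q i) (L.d i) ∩ seg (L.q j) (L.d j) :=
    ⟨mem_segF.1 hxi, mem_segF.1 hxj⟩
  rw [h] at this
  exact this

lemma biUnion_sub_covered {N : ℕ} (L : Layout N) (S : Finset (Fin N)) :
    ∀ p ∈ S.biUnion (fun i => segF (L.q i) (L.d i)), p ∈ L.covered := by
  intro p hp
  obtain ⟨i, -, hpi⟩ := Finset.mem_biUnion.1 hp
  exact Set.mem_iUnion.2 ⟨i, mem_segF.1 hpi⟩

lemma cover_ge {N : ℕ} (L : Layout N) (dd : ℤ × ℤ) :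
    (Finset.univ.filter (fun i => L.d i = dd)).card * 5 ≤ L.covered.ncard := by
  classical
  set S := Finset.univ.filter (fun i => L.d i = dd) with hS
  have hcard : (S.biUnion (fun i => segF (L.q i) (L.d i))).card = S.card * 5 := by
    rw [Finset.card_biUnion]
    · rw [Finset.sum_congr rfl (fun i _ => card_segF (L.d_mem i)), Finset.sum_const,
        smul_eq_mul]
    · intro i hi j hj hij
      exact segF_disjoint L hij (by
        have hi' := (Finset.mem_filter.1 (Finset.mem_coe.1 hi)).2
        have hj' := (Finset.mem_filter.1 (Finset.mem_coe.1 hj)).2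
        rw [hi', hj'])
  calc S.card * 5 = _ := hcard.symm
    _ ≤ L.covered.ncard := card_le_covered L _ (biUnion_sub_covered L S)

lemma main_lemma {N : ℕ} (L : Layout N) (k : ℕ) (hk5 : k % 5 = 1)
    (d1 d2 : ℤ × ℤ) (a b : ZMod 5)
    (h1 : a * (d1.1 : ZMod 5) + b * (d1.2 : ZMod 5) ≠ 0)
    (h2 : a * (d2.1 : ZMod 5) + b * (d2.2 : ZMod 5) = 0)
    (hc1 : (Finset.univ.filter (fun i => L.d i = d1)).card = k)
    (hc2 : (Finset.univ.filter (fun i => L.d i = d2)).card = k) :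
    k * 5 + 4 ≤ L.covered.ncard := by
  classical
  set S1 := Finset.univ.filter (fun i : Fin N => L.d i = d1) with hS1
  set S2 := Finset.univ.filter (fun i : Fin N => L.d i = d2) with hS2
  set A := S1.biUnion (fun i => segF (L.q i) (L.d i)) with hA
  set B := S2.biUnion (fun i => segF (L.q i) (L.d i)) with hB
  set U := A ∪ B with hU
  set u : ZMod 5 → ℕ := fun c => (U.filter (fun p => phi a b p = c)).card with hu
  set bb : ZMod 5 → ℕ := fun c => (B.filter (fun p => phi a b p = c)).card with hbb
  have hdS1 : ∀ i ∈ S1, L.d i = d1 := fun i hi => (Finset.mem_filter.1 hi).2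
  have hdS2 : ∀ i ∈ S2, L.d i = d2 := fun i hi => (Finset.mem_filter.1 hi).2
  have hdisj1 : ∀ i ∈ S1, ∀ j ∈ S1, i ≠ j →
      Disjoint (segF (L.q i) (L.d i)) (segF (L.q j) (L.d j)) :=
    fun i hi j hj hij => segF_disjoint L hij (by rw [hdS1 i hi, hdS1 j hj])
  have hdisj2 : ∀ i ∈ S2, ∀ j ∈ S2, i ≠ j →
      Disjoint (segF (L.q i) (L.d i)) (segF (L.q j) (L.d j)) :=
    fun i hi j hj hij => segF_disjoint L hij (by rw [hdS2 i hi, hdS2 j hj])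
  -- each fiber of U has at least k points (coming from A)
  have hku : ∀ c, k ≤ u c := by
    intro c
    have hsub : A.filter (fun p => phi a b p = c) ⊆ U.filter (fun p => phi a b p = c) :=
      Finset.filter_subset_filter _ Finset.subset_union_left
    have hAc : k ≤ (A.filter (fun p => phi a b p = c)).card := by
      rw [hA, Finset.filter_biUnion,
        Finset.card_biUnion (fun i hi j hj hij =>
          Finset.disjoint_filter_filter (hdisj1 i hi j hj hij))]
      have hone : ∀ i ∈ S1, 1 ≤ ((segF (L.q i) (L.d i)).filter (fun p => phi a b p = c)).card := by
        intro i hi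
        obtain ⟨p, hp, hpc⟩ := segF_hits (q := L.q i) (d := L.d i) (a := a) (b := b)
          (by rw [hdS1 i hi]; exact h1) c
        exact Finset.card_pos.2 ⟨p, Finset.mem_filter.2 ⟨hp, hpc⟩⟩
      calc k = S1.card * 1 := by rw [mul_one, hc1]
        _ ≤ _ := by
            have := Finset.card_nsmul_le_sum S1 _ 1 hone
            simpa using this
    exact le_trans hAc (Finset.card_le_card hsub)
  have hbbu : ∀ c, bb c ≤ u c :=
    fun c => Finset.card_le_card (Finset.filter_subset_filter _ Finset.subset_union_right)
  have hbb5 : ∀ c, 5 ∣ bb c := by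
    intro c
    rw [hbb]
    simp only
    rw [hB, Finset.filter_biUnion,
      Finset.card_biUnion (fun i hi j hj hij =>
        Finset.disjoint_filter_filter (hdisj2 i hi j hj hij))]
    apply Finset.dvd_sum
    intro i hi
    have hconst : ∀ p ∈ segF (L.q i) (L.d i), phi a b p = phi a b (L.q i) :=
      fun p hp => segF_const (by rw [hdS2 i hi]; exact h2) hp
    by_cases hqc : phi a b (L.q i) = c
    · rw [Finset.filter_true_of_mem (fun p hp => by rw [hconst p hp, hqc]),
        card_segF (L.d_mem i)]
    · rw [Finset.filter_false_of_mem (fun p hp h' => hqc (by rw [← hconst p hp]; exact h')),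
        Finset.card_empty]
      exact dvd_zero 5
  have hBcard : B.card = k * 5 := by
    rw [hB, Finset.card_biUnion hdisj2,
      Finset.sum_congr rfl (fun i _ => card_segF (L.d_mem i)), Finset.sum_const, smul_eq_mul, hc2]
  have hBsum : B.card = ∑ c : ZMod 5, bb c :=
    Finset.card_eq_sum_card_fiberwise (fun x _ => Finset.mem_univ (phi a b x))
  have hUsum : U.card = ∑ c : ZMod 5, u c :=
    Finset.card_eq_sum_card_fiberwise (fun x _ => Finset.mem_univ (phi a b x))
  have hUle : U.card ≤ L.covered.ncard := by
    apply card_le_covered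
    intro p hp
    rcases Finset.mem_union.1 hp with h | h
    · exact biUnion_sub_covered L S1 p h
    · exact biUnion_sub_covered L S2 p h
  by_contra hcon
  push_neg at hcon
  have htot : ∑ c : ZMod 5, u c ≤ k * 5 + 3 := by omega
  have hule : ∀ c, u c ≤ k + 3 := by
    intro c
    have h4 : 4 * k ≤ ∑ c' ∈ Finset.univ.erase c, u c' := by
      have h := Finset.card_nsmul_le_sum (Finset.univ.erase c) u k (fun x _ => hku x)
      have hcard : (Finset.univ.erase c).card = 4 := by
        rw [Finset.card_erase_of_mem (Finset.mem_univ c), Finset.card_univ, ZMod.card]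
      rw [hcard, smul_eq_mul] at h
      exact h
    have hadd : ∑ c' ∈ Finset.univ.erase c, u c' + u c = ∑ c' : ZMod 5, u c' :=
      Finset.sum_erase_add _ _ (Finset.mem_univ c)
    omega
  have hble : ∀ c, bb c ≤ k - 1 := by
    intro c
    have h5 := hbb5 c
    have hle := le_trans (hbbu c) (hule c)
    omega
  have hsum : ∑ c : ZMod 5, bb c ≤ 5 * (k - 1) := by
    have h := Finset.sum_le_card_nsmul Finset.univ bb (k - 1) (fun x _ => hble x)
    rw [Finset.card_univ, ZMod.card, smul_eq_mul] at h
    exact h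
  omega

/-- If `N ≢ 1 (mod 4)` and `⌈N/4⌉ ≡ 1 (mod 5)`, then every 5D-layout of `N`
lines covers at least `⌈N/4⌉ · 5 + 4` lattice points.
(Here `(N + 3) / 4` is the ceiling `⌈N/4⌉` in natural-number arithmetic.) -/
theorem layout_covers_ceil_plus_four (N : ℕ) (hpos : 0 < N) (h4 : N % 4 ≠ 1)
    (h5 : ((N + 3) / 4) % 5 = 1) (L : Layout N) :
    ((N + 3) / 4) * 5 + 4 ≤ L.covered.ncard := by
  classical
  set k := (N + 3) / 4 with hk
  have hmem : ∀ i : Fin N, L.d i ∈ ({(1,0),(0,1),(1,1),(1,-1)} : Finset (ℤ × ℤ)) := by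
    intro i
    have h := L.d_mem i
    simp only [Dir, Set.mem_insert_iff, Set.mem_singleton_iff] at h
    simp only [Finset.mem_insert, Finset.mem_singleton]
    exact h
  have hsum := Finset.card_eq_sum_card_fiberwise (s := (Finset.univ : Finset (Fin N)))
      (t := ({(1,0),(0,1),(1,1),(1,-1)} : Finset (ℤ × ℤ))) (f := L.d) (fun x _ => hmem x)
  rw [Finset.card_univ, Fintype.card_fin] at hsum
  rw [show ({(1,0),(0,1),(1,1),(1,-1)} : Finset (ℤ × ℤ))
      = insert (1,0) (insert (0,1) (insert (1,1) {(1,-1)})) from rfl,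
    Finset.sum_insert (by decide), Finset.sum_insert (by decide),
    Finset.sum_insert (by decide), Finset.sum_singleton] at hsum
  set n1 := (Finset.univ.filter (fun i : Fin N => L.d i = ((1:ℤ),(0:ℤ)))).card with hn1
  set n2 := (Finset.univ.filter (fun i : Fin N => L.d i = ((0:ℤ),(1:ℤ)))).card with hn2
  set n3 := (Finset.univ.filter (fun i : Fin N => L.d i = ((1:ℤ),(1:ℤ)))).card with hn3
  set n4 := (Finset.univ.filter (fun i : Fin N => L.d i = ((1:ℤ),(-1:ℤ)))).card with hn4
  by_cases hbig : k + 1 ≤ n1 ∨ k + 1 ≤ n2 ∨ k + 1 ≤ n3 ∨ k + 1 ≤ n4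
  · rcases hbig with h | h | h | h
    · have := cover_ge L ((1:ℤ),(0:ℤ)); rw [← hn1] at this; omega
    · have := cover_ge L ((0:ℤ),(1:ℤ)); rw [← hn2] at this; omega
    · have := cover_ge L ((1:ℤ),(1:ℤ)); rw [← hn3] at this; omega
    · have := cover_ge L ((1:ℤ),(-1:ℤ)); rw [← hn4] at this; omega
  · push_neg at hbig
    obtain ⟨hb1, hb2, hb3, hb4⟩ := hbig
    have hcases : (n1 = k ∧ n2 = k) ∨ (n1 = k ∧ n3 = k) ∨ (n1 = k ∧ n4 = k) ∨
        (n2 = k ∧ n3 = k) ∨ (n2 = k ∧ n4 = k) ∨ (n3 = k ∧ n4 = k) := by omega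
    rcases hcases with ⟨e1, e2⟩ | ⟨e1, e2⟩ | ⟨e1, e2⟩ | ⟨e1, e2⟩ | ⟨e1, e2⟩ | ⟨e1, e2⟩
    · exact main_lemma L k h5 (1,0) (0,1) 1 0 (by norm_num [ZMod.natCast_self] <;> decide) (by norm_num [ZMod.natCast_self] <;> decide) e1 e2
    · exact main_lemma L k h5 (1,0) (1,1) 1 4 (by norm_num [ZMod.natCast_self] <;> decide) (by norm_num [ZMod.natCast_self] <;> decide) e1 e2
    · exact main_lemma L k h5 (1,0) (1,-1) 1 1 (by norm_num [ZMod.natCast_self] <;> decide) (by norm_num [ZMod.natCast_self] <;> decide) e1 e2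
    · exact main_lemma L k h5 (0,1) (1,1) 1 4 (by norm_num [ZMod.natCast_self] <;> decide) (by norm_num [ZMod.natCast_self] <;> decide) e1 e2
    · exact main_lemma L k h5 (0,1) (1,-1) 1 1 (by norm_num [ZMod.natCast_self] <;> decide) (by norm_num [ZMod.natCast_self] <;> decide) e1 e2
    · exact main_lemma L k h5 (1,1) (1,-1) 1 1 (by norm_num [ZMod.natCast_self] <;> decide) (by norm_num [ZMod.natCast_self] <;> decide) e1 e2
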